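/- Let X be a nonempty finite set, N ≥ 1, p_0 and p_1 probability mass functions on X with full support, and q^ref a Markov process on X^{N+2} with full support. Let q^0 ∈ Π_N(p_0, p_1) have full support on X^{N+2}, and define the D-IMF sequence by q^{2l+1} = proj_R(q^{2l}) (reciprocal projection with respect to q^ref) and q^{2l+2} = proj_M(q^{2l+1}) (Markovian projection). Let q* be the unique minimizer of KL(q || q^ref) over Π_N(p_0, p_1). Then every iterate q^l belongs to Π_N(p_0, p_1), and lim_{l→∞} KL(q^l || q*) = 0. -/

import Mathlib

open Finset

/-- A probability mass function on a finite type. -/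
def IsPMF {Z : Type*} [Fintype Z] (p : Z → ℝ) : Prop :=
  (∀ z, 0 ≤ p z) ∧ ∑ z, p z = 1

/-- KL divergence between two pmfs on a finite type (with `0 log 0 := 0`,
which is automatic since `0 * log (0/b) = 0`). -/
noncomputable def KLd {Z : Type*} [Fintype Z] (a b : Z → ℝ) : ℝ :=
  ∑ z, a z * Real.log (a z / b z)

/-- Trajectories with `N` intermediate time steps: indices `0, 1, …, N+1`,
where index `0` is time `0` and index `N+1` is time `1`. -/
abbrev Traj (X : Type*) (N : ℕ) := Fin (N + 2) → X

variable {X : Type*} [Fintype X] [DecidableEq X] {N : ℕ}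

/-- One-time marginal of a process at time index `i`. -/
noncomputable def timeMarg (q : Traj X N → ℝ) (i : Fin (N + 2)) (x : X) : ℝ :=
  ∑ ω : Traj X N, if ω i = x then q ω else 0

/-- Joint marginal of the endpoints `(x_0, x_1)`. -/
noncomputable def endMarg (q : Traj X N → ℝ) (a b : X) : ℝ :=
  ∑ ω : Traj X N, if ω 0 = a ∧ ω (Fin.last (N + 1)) = b then q ω else 0

/-- Joint marginal at the neighboring time indices `n` and `n+1`. -/
noncomputable def pairMarg (q : Traj X N → ℝ) (n : Fin (N + 1)) (y z : X) : ℝ :=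
  ∑ ω : Traj X N, if ω n.castSucc = y ∧ ω n.succ = z then q ω else 0

/-- Transition probability `q(x_{t_n} = z | x_{t_{n-1}} = y)` for the step from
time index `n` to `n+1`. -/
noncomputable def transP (q : Traj X N → ℝ) (n : Fin (N + 1)) (y z : X) : ℝ :=
  pairMarg q n y z / timeMarg q n.castSucc y

/-- Glue endpoints `a`, `b` and inner states `v` into a trajectory. -/
def glue (a : X) (v : Fin N → X) (b : X) : Traj X N :=
  Fin.cons a (Fin.snoc v b)

/-- The bridge `q(x_in | x_0 = a, x_1 = b)`, as a function of the inner states. -/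
noncomputable def bridge (q : Traj X N → ℝ) (a b : X) (v : Fin N → X) : ℝ :=
  q (glue a v b) / endMarg q a b

/-- A process is Markov if it factorizes through its one-step transitions. -/
def IsMarkov (q : Traj X N → ℝ) : Prop :=
  ∀ ω : Traj X N,
    q ω = timeMarg q 0 (ω 0) * ∏ n : Fin (N + 1), transP q n (ω n.castSucc) (ω n.succ)

/-- A process `q` is reciprocal w.r.t. a full-support reference process `qref` if its
bridges coincide with those of `qref` wherever they are defined. -/
def IsReciprocal (qref q : Traj X N → ℝ) : Prop :=
  ∀ a b : X, 0 < endMarg q a b → ∀ v : Fin N → X, bridge q a b v = bridge qref a b v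

/-- Reciprocal projection of `q` w.r.t. `qref`:
`proj_R(q)(x_0, x_in, x_1) = qref(x_in | x_0, x_1) · q(x_0, x_1)`. -/
noncomputable def projR (qref q : Traj X N → ℝ) (ω : Traj X N) : ℝ :=
  (qref ω / endMarg qref (ω 0) (ω (Fin.last (N + 1)))) *
    endMarg q (ω 0) (ω (Fin.last (N + 1)))

/-- Markovian projection of `q`:
`proj_M(q)(x_0, x_in, x_1) = q(x_0) ∏_{n=1}^{N+1} q(x_{t_n} | x_{t_{n-1}})`. -/
noncomputable def projM (q : Traj X N → ℝ) (ω : Traj X N) : ℝ :=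
  timeMarg q 0 (ω 0) * ∏ n : Fin (N + 1), transP q n (ω n.castSucc) (ω n.succ)

/-- Marginal of the bridge of `q` at time index `i`:
`q(x_{t_i} = y | x_0 = a, x_1 = b)`. -/
noncomputable def bridgeAt (q : Traj X N → ℝ) (i : Fin (N + 2)) (y a b : X) : ℝ :=
  (∑ ω : Traj X N, if ω 0 = a ∧ ω i = y ∧ ω (Fin.last (N + 1)) = b then q ω else 0) /
    endMarg q a b

/-- Conditional transition given the terminal point:
`q(x_{t_n} = z | x_{t_{n-1}} = y, x_1 = b)` for the step from time index `n` to `n+1`. -/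
noncomputable def condTrans (q : Traj X N → ℝ) (n : Fin (N + 1)) (y z b : X) : ℝ :=
  (∑ ω : Traj X N,
      if ω n.castSucc = y ∧ ω n.succ = z ∧ ω (Fin.last (N + 1)) = b then q ω else 0) /
    (∑ ω : Traj X N, if ω n.castSucc = y ∧ ω (Fin.last (N + 1)) = b then q ω else 0)

/-- Membership in `Π_N(p_0, p_1)`: a process with prescribed marginals at times 0 and 1. -/
def InPiN (p0 p1 : X → ℝ) (q : Traj X N → ℝ) : Prop :=
  IsPMF q ∧ (∀ x, timeMarg q 0 x = p0 x) ∧ (∀ x, timeMarg q (Fin.last (N + 1)) x = p1 x)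

/-- Membership in `Π(p_0, p_1)`: couplings on `X²` with prescribed marginals. -/
def InPi2 (p0 p1 : X → ℝ) (s : X × X → ℝ) : Prop :=
  IsPMF s ∧ (∀ a, ∑ b, s (a, b) = p0 a) ∧ (∀ b, ∑ a, s (a, b) = p1 b)

set_option linter.unusedSectionVars false
section Aux
variable {X : Type*} [Fintype X] [DecidableEq X] {N : ℕ}

lemma glue_zero (a : X) (v : Fin N → X) (b : X) : glue a v b 0 = a := rfl

lemma glue_succ (a : X) (v : Fin N → X) (b : X) (j : Fin (N + 1)) :
    glue a v b j.succ = (Fin.snoc v b : Fin (N + 1) → X) j := by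
  simp [glue]

lemma glue_last (a : X) (v : Fin N → X) (b : X) : glue a v b (Fin.last (N + 1)) = b := by
  rw [← Fin.succ_last, glue_succ, Fin.snoc_last]

lemma glue_inner (a : X) (v : Fin N → X) (b : X) (j : Fin N) :
    glue a v b j.succ.castSucc = v j := by
  rw [← Fin.succ_castSucc, glue_succ, Fin.snoc_castSucc]

/-- Trajectories are equivalent to triples (start, inner, end). -/
def trajEquiv : Traj X N ≃ X × (Fin N → X) × X where
  toFun ω := (ω 0, fun j => ω j.succ.castSucc, ω (Fin.last (N + 1)))
  invFun p := glue p.1 p.2.1 p.2.2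
  left_inv ω := by
    funext i
    refine Fin.cases ?_ (fun j => ?_) i
    · rfl
    · show glue _ _ _ j.succ = ω j.succ
      rw [glue_succ]
      refine Fin.lastCases ?_ (fun j' => ?_) j
      · rw [Fin.snoc_last, Fin.succ_last]
      · rw [Fin.snoc_castSucc, Fin.succ_castSucc]
  right_inv p := by
    obtain ⟨a, v, b⟩ := p
    refine Prod.ext (glue_zero a v b) (Prod.ext ?_ (glue_last a v b))
    funext j
    exact glue_inner a v b j

lemma sum_traj (f : Traj X N → ℝ) :
    ∑ ω : Traj X N, f ω = ∑ a : X, ∑ v : Fin N → X, ∑ b : X, f (glue a v b) := by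
  rw [← Equiv.sum_comp (trajEquiv (X := X) (N := N)).symm f, Fintype.sum_prod_type]
  refine Finset.sum_congr rfl fun a _ => ?_
  rw [Fintype.sum_prod_type]
  rfl

lemma endMarg_eq_sum_glue (q : Traj X N → ℝ) (a b : X) :
    endMarg q a b = ∑ v : Fin N → X, q (glue a v b) := by
  rw [endMarg, sum_traj]
  rw [Finset.sum_eq_single a]
  · rw [Finset.sum_comm]
    rw [Finset.sum_eq_single b]
    · refine Finset.sum_congr rfl fun v _ => ?_
      simp [glue_zero, glue_last]
    · intro b' _ hb'
      refine Finset.sum_eq_zero fun v _ => ?_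
      simp [glue_zero, glue_last, hb']
    · simp
  · intro a' _ ha'
    refine Finset.sum_eq_zero fun v _ => Finset.sum_eq_zero fun b' _ => ?_
    simp [glue_zero, ha']
  · simp

end Aux
section PartB
variable {X : Type*} [Fintype X] [DecidableEq X] {N : ℕ}

lemma sum_swap3 {α β γ : Type*} [Fintype α] [Fintype β] [Fintype γ] (F : α → β → γ → ℝ) :
    (∑ y : α, ∑ z : β, ∑ ω : γ, F y z ω) = ∑ ω : γ, ∑ y : α, ∑ z : β, F y z ω :=
  calc (∑ y : α, ∑ z : β, ∑ ω : γ, F y z ω)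
      = ∑ y : α, ∑ ω : γ, ∑ z : β, F y z ω :=
        Finset.sum_congr rfl fun y _ => Finset.sum_comm
    _ = ∑ ω : γ, ∑ y : α, ∑ z : β, F y z ω := Finset.sum_comm

lemma timeMarg_nonneg {q : Traj X N → ℝ} (hq : ∀ ω, 0 ≤ q ω) (i : Fin (N + 2)) (x : X) :
    0 ≤ timeMarg q i x :=
  Finset.sum_nonneg fun ω _ => by split <;> [exact hq ω; exact le_rfl]

lemma timeMarg_pos [Nonempty X] {q : Traj X N → ℝ} (hq : ∀ ω, 0 < q ω) (i : Fin (N + 2)) (x : X) :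
    0 < timeMarg q i x := by
  refine Finset.sum_pos' (fun ω _ => by split <;> [exact (hq ω).le; exact le_rfl]) ?_
  refine ⟨fun _ => x, Finset.mem_univ _, ?_⟩
  simp [hq]

lemma timeMarg_le_sum {q : Traj X N → ℝ} (hq : ∀ ω, 0 ≤ q ω) (i : Fin (N + 2)) (x : X) :
    timeMarg q i x ≤ ∑ ω, q ω := by
  refine Finset.sum_le_sum fun ω _ => ?_
  split <;> [exact le_rfl; exact hq ω]

lemma sum_timeMarg (q : Traj X N → ℝ) (i : Fin (N + 2)) :
    ∑ x, timeMarg q i x = ∑ ω, q ω := by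
  simp only [timeMarg]; rw [Finset.sum_comm]
  exact Finset.sum_congr rfl fun ω _ => by simp

lemma pairMarg_nonneg {q : Traj X N → ℝ} (hq : ∀ ω, 0 ≤ q ω) (n : Fin (N + 1)) (y z : X) :
    0 ≤ pairMarg q n y z :=
  Finset.sum_nonneg fun ω _ => by split <;> [exact hq ω; exact le_rfl]

lemma pairMarg_pos {q : Traj X N → ℝ} (hq : ∀ ω, 0 < q ω) (n : Fin (N + 1)) (y z : X) :
    0 < pairMarg q n y z := by
  refine Finset.sum_pos' (fun ω _ => by split <;> [exact (hq ω).le; exact le_rfl]) ?_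
  refine ⟨fun j => if j = n.castSucc then y else z, Finset.mem_univ _, ?_⟩
  have h1 : n.succ ≠ n.castSucc := (Fin.castSucc_lt_succ : n.castSucc < n.succ).ne'
  simp [h1, hq]

lemma sum_pairMarg_snd (q : Traj X N → ℝ) (n : Fin (N + 1)) (y : X) :
    ∑ z, pairMarg q n y z = timeMarg q n.castSucc y := by
  simp only [pairMarg, timeMarg]; rw [Finset.sum_comm]
  refine Finset.sum_congr rfl fun ω _ => ?_
  by_cases h : ω n.castSucc = y <;> simp [h]

lemma sum_pairMarg_fst (q : Traj X N → ℝ) (n : Fin (N + 1)) (z : X) :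
    ∑ y, pairMarg q n y z = timeMarg q n.succ z := by
  simp only [pairMarg, timeMarg]; rw [Finset.sum_comm]
  refine Finset.sum_congr rfl fun ω _ => ?_
  by_cases h : ω n.succ = z <;> simp [h, and_comm]

lemma pairMarg_eq_mul {q : Traj X N → ℝ} {n : Fin (N + 1)} {y : X}
    (h : timeMarg q n.castSucc y ≠ 0) (z : X) :
    pairMarg q n y z = timeMarg q n.castSucc y * transP q n y z := by
  rw [transP, mul_div_cancel₀ _ h]

lemma transP_nonneg {q : Traj X N → ℝ} (hq : ∀ ω, 0 ≤ q ω) (n : Fin (N + 1)) (y z : X) :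
    0 ≤ transP q n y z :=
  div_nonneg (pairMarg_nonneg hq n y z) (timeMarg_nonneg hq _ y)

lemma transP_pos [Nonempty X] {q : Traj X N → ℝ} (hq : ∀ ω, 0 < q ω) (n : Fin (N + 1)) (y z : X) :
    0 < transP q n y z :=
  div_pos (pairMarg_pos hq n y z) (timeMarg_pos (fun ω => hq ω) _ y)

lemma sum_transP [Nonempty X] {q : Traj X N → ℝ} (hq : ∀ ω, 0 < q ω) (n : Fin (N + 1)) (y : X) :
    ∑ z, transP q n y z = 1 := by
  have h := timeMarg_pos hq n.castSucc y
  simp only [transP]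
  rw [← Finset.sum_div, sum_pairMarg_snd, div_self h.ne']

lemma endMarg_nonneg {q : Traj X N → ℝ} (hq : ∀ ω, 0 ≤ q ω) (a b : X) :
    0 ≤ endMarg q a b :=
  Finset.sum_nonneg fun ω _ => by split <;> [exact hq ω; exact le_rfl]

lemma endMarg_pos [Nonempty X] {q : Traj X N → ℝ} (hq : ∀ ω, 0 < q ω) (a b : X) :
    0 < endMarg q a b := by
  rw [endMarg_eq_sum_glue]
  exact Finset.sum_pos (fun v _ => hq _) Finset.univ_nonempty

lemma endMarg_le_sum {q : Traj X N → ℝ} (hq : ∀ ω, 0 ≤ q ω) (a b : X) :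
    endMarg q a b ≤ ∑ ω, q ω := by
  refine Finset.sum_le_sum fun ω _ => ?_
  split <;> [exact le_rfl; exact hq ω]

lemma sum_endMarg_snd (q : Traj X N → ℝ) (a : X) :
    ∑ b, endMarg q a b = timeMarg q 0 a := by
  simp only [endMarg, timeMarg]; rw [Finset.sum_comm]
  refine Finset.sum_congr rfl fun ω _ => ?_
  by_cases h : ω 0 = a <;> simp [h]

lemma sum_endMarg_fst (q : Traj X N → ℝ) (b : X) :
    ∑ a, endMarg q a b = timeMarg q (Fin.last (N + 1)) b := by
  simp only [endMarg, timeMarg]; rw [Finset.sum_comm]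
  refine Finset.sum_congr rfl fun ω _ => ?_
  by_cases h : ω (Fin.last (N + 1)) = b <;> simp [h, and_comm]

/-- expectation of a function of one coordinate. -/
lemma sum_mul_coord (q : Traj X N → ℝ) (i : Fin (N + 2)) (f : X → ℝ) :
    ∑ ω, q ω * f (ω i) = ∑ x, timeMarg q i x * f x := by
  simp only [timeMarg]
  simp only [Finset.sum_mul]
  rw [Finset.sum_comm]
  refine Finset.sum_congr rfl fun ω _ => ?_
  rw [Finset.sum_eq_single (ω i)] <;> simp +contextual [eq_comm]

/-- expectation of a function of a neighboring pair of coordinates. -/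
lemma sum_mul_pair (q : Traj X N → ℝ) (n : Fin (N + 1)) (f : X → X → ℝ) :
    ∑ ω, q ω * f (ω n.castSucc) (ω n.succ) = ∑ y, ∑ z, pairMarg q n y z * f y z := by
  simp only [pairMarg, Finset.sum_mul]
  have key : ∀ (y z : X) (ω : Traj X N),
      (if ω n.castSucc = y ∧ ω n.succ = z then q ω else 0) * f y z
        = if ω n.castSucc = y ∧ ω n.succ = z then q ω * f (ω n.castSucc) (ω n.succ) else 0 := by
    intro y z ω
    split_ifs with h
    · rw [h.1, h.2]
    · rw [zero_mul]
  simp only [key]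
  rw [sum_swap3]
  refine Finset.sum_congr rfl fun ω _ => ?_
  simp [ite_and]

/-- expectation of a function of the endpoints. -/
lemma sum_mul_ends (q : Traj X N → ℝ) (f : X → X → ℝ) :
    ∑ ω, q ω * f (ω 0) (ω (Fin.last (N + 1))) = ∑ a, ∑ b, endMarg q a b * f a b := by
  simp only [endMarg, Finset.sum_mul]
  have key : ∀ (a b : X) (ω : Traj X N),
      (if ω 0 = a ∧ ω (Fin.last (N + 1)) = b then q ω else 0) * f a b
        = if ω 0 = a ∧ ω (Fin.last (N + 1)) = b then q ω * f (ω 0) (ω (Fin.last (N + 1))) else 0 := by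
    intro a b ω
    split_ifs with h
    · rw [h.1, h.2]
    · rw [zero_mul]
  simp only [key]
  rw [sum_swap3]
  refine Finset.sum_congr rfl fun ω _ => ?_
  simp [ite_and]

end PartB
section PartC
variable {X : Type*} [Fintype X] [DecidableEq X] {N : ℕ}

/-- Forward marginal evolution of an initial distribution through kernels. -/
noncomputable def fwd {X : Type*} [Fintype X] (g : X → ℝ) (K : ℕ → X → X → ℝ) : ℕ → X → ℝ
  | 0 => g
  | k + 1 => fun z => ∑ y, fwd g K k y * K k y z

lemma sum_snoc {k : ℕ} (F : (Fin (k + 2) → X) → ℝ) :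
    ∑ ω : Fin (k + 2) → X, F ω = ∑ ρ : Fin (k + 1) → X, ∑ b : X, F (Fin.snoc ρ b) := by
  let e : (Fin (k + 2) → X) ≃ (Fin (k + 1) → X) × X :=
    { toFun := fun ω => (fun j => ω j.castSucc, ω (Fin.last (k + 1)))
      invFun := fun p => Fin.snoc p.1 p.2
      left_inv := fun ω => by
        funext i
        refine Fin.lastCases ?_ (fun j => ?_) i
        · exact Fin.snoc_last _ _
        · exact Fin.snoc_castSucc _ _ _
      right_inv := fun p => by
        obtain ⟨ρ, b⟩ := p
        simp }
  rw [← Equiv.sum_comp e.symm F, Fintype.sum_prod_type]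
  rfl

lemma sum_fin_one (F : (Fin 1 → X) → ℝ) :
    ∑ ω : Fin 1 → X, F ω = ∑ x : X, F (fun _ => x) := by
  rw [← Equiv.sum_comp (Equiv.funUnique (Fin 1) X).symm F]
  rfl

lemma snoc_step_prod {k : ℕ} (K : ℕ → X → X → ℝ) (ρ : Fin (k + 1) → X) (b : X) :
    (∏ n : Fin (k + 1), K ↑n ((Fin.snoc ρ b : Fin (k + 2) → X) n.castSucc)
        ((Fin.snoc ρ b : Fin (k + 2) → X) n.succ))
      = (∏ n : Fin k, K ↑n (ρ n.castSucc) (ρ n.succ)) * K k (ρ (Fin.last k)) b := by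
  rw [Fin.prod_univ_castSucc]
  congr 1
  · refine Finset.prod_congr rfl fun m _ => ?_
    rw [Fin.coe_castSucc, Fin.succ_castSucc, Fin.snoc_castSucc, Fin.snoc_castSucc]
  · rw [Fin.succ_last, Fin.snoc_last, Fin.snoc_castSucc, Fin.val_last]

/-- Chain-sum lemma: expectation of a one-coordinate function under a Markov factorization. -/
lemma chain_sum_coord : ∀ (k : ℕ) (g : X → ℝ) (K : ℕ → X → X → ℝ),
    (∀ n y, ∑ z, K n y z = 1) → ∀ (i : Fin (k + 1)) (f : X → ℝ),
    (∑ ω : Fin (k + 1) → X,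
      (g (ω 0) * ∏ n : Fin k, K ↑n (ω n.castSucc) (ω n.succ)) * f (ω i))
      = ∑ x, fwd g K ↑i x * f x := by
  intro k
  induction k with
  | zero =>
    intro g K hK i f
    rw [sum_fin_one]
    have hi : (i : ℕ) = 0 := Nat.lt_one_iff.mp i.isLt
    simp [fwd, hi]
  | succ k IH =>
    intro g K hK i f
    rw [sum_snoc]
    refine Fin.lastCases ?_ (fun j => ?_) i
    · -- i = last (k+1)
      have step : ∀ (ρ : Fin (k + 1) → X) (b : X),
          (g ((Fin.snoc ρ b : Fin (k + 2) → X) 0) *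
              ∏ n : Fin (k + 1), K ↑n ((Fin.snoc ρ b : Fin (k + 2) → X) n.castSucc)
                ((Fin.snoc ρ b : Fin (k + 2) → X) n.succ)) *
            f ((Fin.snoc ρ b : Fin (k + 2) → X) (Fin.last (k + 1)))
          = (g (ρ 0) * ∏ n : Fin k, K ↑n (ρ n.castSucc) (ρ n.succ)) *
              (K k (ρ (Fin.last k)) b * f b) := by
        intro ρ b
        rw [snoc_step_prod, Fin.snoc_last,
          show (0 : Fin (k + 2)) = Fin.castSucc 0 by rfl, Fin.snoc_castSucc]
        ring
      simp only [step]
      rw [Finset.sum_comm]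
      have inner : ∀ b : X,
          (∑ ρ : Fin (k + 1) → X, (g (ρ 0) * ∏ n : Fin k, K ↑n (ρ n.castSucc) (ρ n.succ)) *
            (K k (ρ (Fin.last k)) b * f b))
          = ∑ y, fwd g K k y * (K k y b * f b) := by
        intro b
        have := IH g K hK (Fin.last k) (fun y => K k y b * f b)
        rw [Fin.val_last] at this
        exact this
      simp only [inner]
      rw [Fin.val_last]
      show _ = ∑ x, fwd g K (k + 1) x * f x
      simp only [fwd, Finset.sum_mul]
      refine Finset.sum_congr rfl fun y _ => Finset.sum_congr rfl fun x _ => by ring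
    · -- i = castSucc j
      have step : ∀ (ρ : Fin (k + 1) → X) (b : X),
          (g ((Fin.snoc ρ b : Fin (k + 2) → X) 0) *
              ∏ n : Fin (k + 1), K ↑n ((Fin.snoc ρ b : Fin (k + 2) → X) n.castSucc)
                ((Fin.snoc ρ b : Fin (k + 2) → X) n.succ)) *
            f ((Fin.snoc ρ b : Fin (k + 2) → X) j.castSucc)
          = ((g (ρ 0) * ∏ n : Fin k, K ↑n (ρ n.castSucc) (ρ n.succ)) * f (ρ j)) *
              K k (ρ (Fin.last k)) b := by
        intro ρ b
        rw [snoc_step_prod, Fin.snoc_castSucc,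
          show (0 : Fin (k + 2)) = Fin.castSucc 0 by rfl, Fin.snoc_castSucc]
        ring
      simp only [step]
      have : ∀ ρ : Fin (k + 1) → X,
          (∑ b, ((g (ρ 0) * ∏ n : Fin k, K ↑n (ρ n.castSucc) (ρ n.succ)) * f (ρ j)) *
            K k (ρ (Fin.last k)) b)
          = (g (ρ 0) * ∏ n : Fin k, K ↑n (ρ n.castSucc) (ρ n.succ)) * f (ρ j) := by
        intro ρ
        rw [← Finset.mul_sum, hK, mul_one]
      simp only [this]
      have := IH g K hK j f
      rw [Fin.coe_castSucc]
      exact this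

/-- Chain-sum lemma: expectation of a function of an adjacent pair. -/
lemma chain_sum_pair : ∀ (k : ℕ) (g : X → ℝ) (K : ℕ → X → X → ℝ),
    (∀ n y, ∑ z, K n y z = 1) → ∀ (j : Fin k) (f : X → X → ℝ),
    (∑ ω : Fin (k + 1) → X,
      (g (ω 0) * ∏ n : Fin k, K ↑n (ω n.castSucc) (ω n.succ)) * f (ω j.castSucc) (ω j.succ))
      = ∑ y, ∑ z, (fwd g K ↑j y * K ↑j y z) * f y z := by
  intro k
  induction k with
  | zero => intro g K hK j f; exact j.elim0
  | succ k IH =>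
    intro g K hK j f
    rw [sum_snoc]
    refine Fin.lastCases ?_ (fun m => ?_) j
    · -- j = last k : pair (ρ last, b)
      have step : ∀ (ρ : Fin (k + 1) → X) (b : X),
          (g ((Fin.snoc ρ b : Fin (k + 2) → X) 0) *
              ∏ n : Fin (k + 1), K ↑n ((Fin.snoc ρ b : Fin (k + 2) → X) n.castSucc)
                ((Fin.snoc ρ b : Fin (k + 2) → X) n.succ)) *
            f ((Fin.snoc ρ b : Fin (k + 2) → X) (Fin.last k).castSucc)
              ((Fin.snoc ρ b : Fin (k + 2) → X) (Fin.last k).succ)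
          = (g (ρ 0) * ∏ n : Fin k, K ↑n (ρ n.castSucc) (ρ n.succ)) *
              (K k (ρ (Fin.last k)) b * f (ρ (Fin.last k)) b) := by
        intro ρ b
        rw [snoc_step_prod, Fin.succ_last, Fin.snoc_last, Fin.snoc_castSucc,
          show (0 : Fin (k + 2)) = Fin.castSucc 0 by rfl, Fin.snoc_castSucc]
        ring
      simp only [step]
      have inner : ∀ ρ : Fin (k + 1) → X,
          (∑ b, (g (ρ 0) * ∏ n : Fin k, K ↑n (ρ n.castSucc) (ρ n.succ)) *
            (K k (ρ (Fin.last k)) b * f (ρ (Fin.last k)) b))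
          = (g (ρ 0) * ∏ n : Fin k, K ↑n (ρ n.castSucc) (ρ n.succ)) *
            (∑ b, K k (ρ (Fin.last k)) b * f (ρ (Fin.last k)) b) := by
        intro ρ; rw [Finset.mul_sum]
      simp only [inner]
      have key := chain_sum_coord k g K hK (Fin.last k) (fun y => ∑ b, K k y b * f y b)
      rw [Fin.val_last] at key
      rw [key, Fin.val_last]
      simp only [Finset.mul_sum]
      refine Finset.sum_congr rfl fun y _ => Finset.sum_congr rfl fun z _ => by ring
    · -- j = castSucc m
      have step : ∀ (ρ : Fin (k + 1) → X) (b : X),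
          (g ((Fin.snoc ρ b : Fin (k + 2) → X) 0) *
              ∏ n : Fin (k + 1), K ↑n ((Fin.snoc ρ b : Fin (k + 2) → X) n.castSucc)
                ((Fin.snoc ρ b : Fin (k + 2) → X) n.succ)) *
            f ((Fin.snoc ρ b : Fin (k + 2) → X) m.castSucc.castSucc)
              ((Fin.snoc ρ b : Fin (k + 2) → X) m.castSucc.succ)
          = ((g (ρ 0) * ∏ n : Fin k, K ↑n (ρ n.castSucc) (ρ n.succ)) * f (ρ m.castSucc) (ρ m.succ)) *
              K k (ρ (Fin.last k)) b := by
        intro ρ b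
        rw [snoc_step_prod, Fin.snoc_castSucc, Fin.succ_castSucc, Fin.snoc_castSucc,
          show (0 : Fin (k + 2)) = Fin.castSucc 0 by rfl, Fin.snoc_castSucc]
        ring
      simp only [step]
      have inner : ∀ ρ : Fin (k + 1) → X,
          (∑ b, ((g (ρ 0) * ∏ n : Fin k, K ↑n (ρ n.castSucc) (ρ n.succ)) *
              f (ρ m.castSucc) (ρ m.succ)) * K k (ρ (Fin.last k)) b)
          = (g (ρ 0) * ∏ n : Fin k, K ↑n (ρ n.castSucc) (ρ n.succ)) *
              f (ρ m.castSucc) (ρ m.succ) := by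
        intro ρ; rw [← Finset.mul_sum, hK, mul_one]
      simp only [inner]
      have := IH g K hK m f
      rw [Fin.coe_castSucc]
      exact this

end PartC
section PartD
variable {X : Type*} [Fintype X] [DecidableEq X] {N : ℕ}

/-- Kernels of `q`, as a family indexed by `ℕ` (junk value: uniform). -/
noncomputable def Kq (q : Traj X N → ℝ) : ℕ → X → X → ℝ := fun n =>
  if h : n < N + 1 then transP q ⟨n, h⟩ else fun _ _ => (Fintype.card X : ℝ)⁻¹

lemma Kq_stoch [Nonempty X] {q : Traj X N → ℝ} (hq : ∀ ω, 0 < q ω) (n : ℕ) (y : X) :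
    ∑ z, Kq q n y z = 1 := by
  rw [Kq]
  split
  · exact sum_transP hq _ y
  · rw [Finset.sum_const, Finset.card_univ, nsmul_eq_mul,
      mul_inv_cancel₀ (Nat.cast_ne_zero.mpr Fintype.card_ne_zero)]

lemma Kq_pos [Nonempty X] {q : Traj X N → ℝ} (hq : ∀ ω, 0 < q ω) (n : ℕ) (y z : X) :
    0 < Kq q n y z := by
  rw [Kq]
  split
  · exact transP_pos hq _ y z
  · positivity

lemma fwd_timeMarg [Nonempty X] {q : Traj X N → ℝ} (hq : ∀ ω, 0 < q ω) :
    ∀ (k : ℕ) (hk : k < N + 2), fwd (timeMarg q 0) (Kq q) k = timeMarg q ⟨k, hk⟩ := by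
  intro k
  induction k with
  | zero => intro hk; rfl
  | succ k IH =>
    intro hk
    have hk' : k < N + 1 := Nat.lt_of_succ_lt_succ hk
    funext z
    show (∑ y, fwd (timeMarg q 0) (Kq q) k y * Kq q k y z) = _
    rw [IH (Nat.lt_of_succ_lt hk)]
    have hKq : Kq q k = transP q ⟨k, hk'⟩ := dif_pos hk'
    rw [hKq]
    have hcs : (⟨k, Nat.lt_of_succ_lt hk⟩ : Fin (N + 2)) = (⟨k, hk'⟩ : Fin (N + 1)).castSucc := rfl
    rw [hcs]
    have : ∀ y, timeMarg q (⟨k, hk'⟩ : Fin (N + 1)).castSucc y * transP q ⟨k, hk'⟩ y z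
        = pairMarg q ⟨k, hk'⟩ y z := fun y =>
      (pairMarg_eq_mul (timeMarg_pos hq _ y).ne' z).symm
    simp only [this]
    rw [sum_pairMarg_fst]
    rfl

lemma projM_apply (q : Traj X N → ℝ) (ω : Traj X N) :
    projM q ω = (timeMarg q 0 (ω 0) *
      ∏ n : Fin (N + 1), Kq q ↑n (ω n.castSucc) (ω n.succ)) := by
  rw [projM]
  congr 1
  refine Finset.prod_congr rfl fun n _ => ?_
  rw [Kq, dif_pos n.isLt]

lemma timeMarg_projM [Nonempty X] {q : Traj X N → ℝ} (hq : ∀ ω, 0 < q ω) (i : Fin (N + 2)) (x : X) :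
    timeMarg (projM q) i x = timeMarg q i x := by
  have key : timeMarg (projM q) i x
      = ∑ ω : Traj X N, (timeMarg q 0 (ω 0) *
          ∏ n : Fin (N + 1), Kq q ↑n (ω n.castSucc) (ω n.succ)) *
          (if ω i = x then 1 else 0) := by
    rw [timeMarg]
    refine Finset.sum_congr rfl fun ω _ => ?_
    rw [mul_ite, mul_one, mul_zero, projM_apply]
  rw [key, chain_sum_coord (N + 1) _ _ (Kq_stoch hq) i (fun y => if y = x then 1 else 0),
    fwd_timeMarg hq ↑i i.isLt]
  rw [Finset.sum_eq_single x]
  · simp [Fin.eta]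
  · intro y _ hy
    simp [hy]
  · simp

lemma pairMarg_projM [Nonempty X] {q : Traj X N → ℝ} (hq : ∀ ω, 0 < q ω) (n : Fin (N + 1))
    (y0 z0 : X) : pairMarg (projM q) n y0 z0 = pairMarg q n y0 z0 := by
  have key : pairMarg (projM q) n y0 z0
      = ∑ ω : Traj X N, (timeMarg q 0 (ω 0) *
          ∏ m : Fin (N + 1), Kq q ↑m (ω m.castSucc) (ω m.succ)) *
          (if ω n.castSucc = y0 then (if ω n.succ = z0 then 1 else 0) else 0) := by
    rw [pairMarg]
    refine Finset.sum_congr rfl fun ω _ => ?_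
    rw [projM_apply, ite_and]; split_ifs <;> ring
  rw [key, chain_sum_pair (N + 1) _ _ (Kq_stoch hq) n
    (fun y z => if y = y0 then (if z = z0 then 1 else 0) else 0)]
  rw [Finset.sum_eq_single y0]
  · rw [Finset.sum_eq_single z0]
    · rw [fwd_timeMarg hq ↑n (Nat.lt_succ_of_lt n.isLt)]
      have h1 : Kq q ↑n y0 z0 = transP q n y0 z0 := by
        rw [Kq, dif_pos n.isLt, Fin.eta]
      have h2 : (⟨↑n, Nat.lt_succ_of_lt n.isLt⟩ : Fin (N + 2)) = n.castSucc := rfl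
      rw [h1, h2]
      simp [(pairMarg_eq_mul (timeMarg_pos hq n.castSucc y0).ne' z0).symm]
    · intro z _ hz; simp [hz]
    · simp
  · intro y _ hy; simp [hy]
  · simp

lemma sum_projM [Nonempty X] {q : Traj X N → ℝ} (hq : ∀ ω, 0 < q ω) :
    ∑ ω, projM q ω = ∑ ω, q ω := by
  have key : ∑ ω, projM q ω
      = ∑ ω : Traj X N, (timeMarg q 0 (ω 0) *
          ∏ n : Fin (N + 1), Kq q ↑n (ω n.castSucc) (ω n.succ)) * (fun _ : X => 1) (ω 0) := by
    refine Finset.sum_congr rfl fun ω _ => ?_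
    rw [projM_apply]; ring
  rw [key, chain_sum_coord (N + 1) _ _ (Kq_stoch hq) 0 (fun _ => 1)]
  have h0 : ((0 : Fin (N + 2)) : ℕ) = 0 := rfl
  rw [h0]
  simp only [mul_one]
  show ∑ x, timeMarg q 0 x = _
  exact sum_timeMarg q 0

lemma projM_pos [Nonempty X] {q : Traj X N → ℝ} (hq : ∀ ω, 0 < q ω) (ω : Traj X N) :
    0 < projM q ω := by
  rw [projM]
  exact mul_pos (timeMarg_pos hq 0 _) (Finset.prod_pos fun n _ => transP_pos hq n _ _)

lemma transP_projM [Nonempty X] {q : Traj X N → ℝ} (hq : ∀ ω, 0 < q ω) (n : Fin (N + 1)) :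
    transP (projM q) n = transP q n := by
  funext y z
  rw [transP, transP, pairMarg_projM hq, timeMarg_projM hq]

lemma isMarkov_projM [Nonempty X] {q : Traj X N → ℝ} (hq : ∀ ω, 0 < q ω) :
    IsMarkov (projM q) := by
  intro ω
  rw [timeMarg_projM hq]
  have : ∀ n : Fin (N + 1), transP (projM q) n (ω n.castSucc) (ω n.succ)
      = transP q n (ω n.castSucc) (ω n.succ) := fun n => by rw [transP_projM hq]
  rw [Finset.prod_congr rfl fun n _ => this n]
  rfl

lemma isMarkov_apply {m : Traj X N → ℝ} (hm : IsMarkov m) (ω : Traj X N) :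
    m ω = projM m ω := hm ω

lemma inPiN_projM [Nonempty X] {p0 p1 : X → ℝ} {q : Traj X N → ℝ} (hq : InPiN p0 p1 q)
    (hqpos : ∀ ω, 0 < q ω) : InPiN p0 p1 (projM q) := by
  obtain ⟨⟨hnn, hsum⟩, h0, h1⟩ := hq
  refine ⟨⟨fun ω => (projM_pos hqpos ω).le, by rw [sum_projM hqpos, hsum]⟩, ?_, ?_⟩
  · intro x; rw [timeMarg_projM hqpos, h0]
  · intro x; rw [timeMarg_projM hqpos, h1]

end PartD
section PartE
variable {X : Type*} [Fintype X] [DecidableEq X] {N : ℕ}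

lemma projR_apply (qref q : Traj X N → ℝ) (ω : Traj X N) :
    projR qref q ω = qref ω / endMarg qref (ω 0) (ω (Fin.last (N + 1)))
      * endMarg q (ω 0) (ω (Fin.last (N + 1))) := rfl

lemma projR_glue (qref q : Traj X N → ℝ) (a : X) (v : Fin N → X) (b : X) :
    projR qref q (glue a v b) = qref (glue a v b) / endMarg qref a b * endMarg q a b := by
  rw [projR_apply, glue_zero, glue_last]

lemma endMarg_projR [Nonempty X] {qref : Traj X N → ℝ} (href : ∀ ω, 0 < qref ω)
    (q : Traj X N → ℝ) (a b : X) : endMarg (projR qref q) a b = endMarg q a b := by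
  rw [endMarg_eq_sum_glue]
  have : ∀ v : Fin N → X, projR qref q (glue a v b)
      = qref (glue a v b) / endMarg qref a b * endMarg q a b := fun v => projR_glue qref q a v b
  simp only [this]
  rw [← Finset.sum_mul, ← Finset.sum_div, ← endMarg_eq_sum_glue,
    div_self (endMarg_pos href a b).ne', one_mul]

lemma projR_pos [Nonempty X] {qref q : Traj X N → ℝ} (href : ∀ ω, 0 < qref ω)
    (hq : ∀ ω, 0 < q ω) (ω : Traj X N) : 0 < projR qref q ω :=
  mul_pos (div_pos (href ω) (endMarg_pos href _ _)) (endMarg_pos hq _ _)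

lemma timeMarg_projR_zero [Nonempty X] {qref : Traj X N → ℝ} (href : ∀ ω, 0 < qref ω)
    (q : Traj X N → ℝ) (a : X) : timeMarg (projR qref q) 0 a = timeMarg q 0 a := by
  rw [← sum_endMarg_snd, ← sum_endMarg_snd]
  exact Finset.sum_congr rfl fun b _ => endMarg_projR href q a b

lemma timeMarg_projR_last [Nonempty X] {qref : Traj X N → ℝ} (href : ∀ ω, 0 < qref ω)
    (q : Traj X N → ℝ) (b : X) :
    timeMarg (projR qref q) (Fin.last (N + 1)) b = timeMarg q (Fin.last (N + 1)) b := by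
  rw [← sum_endMarg_fst, ← sum_endMarg_fst]
  exact Finset.sum_congr rfl fun a _ => endMarg_projR href q a b

lemma sum_projR [Nonempty X] {qref : Traj X N → ℝ} (href : ∀ ω, 0 < qref ω)
    (q : Traj X N → ℝ) : ∑ ω, projR qref q ω = ∑ ω, q ω := by
  rw [← sum_timeMarg (projR qref q) 0, ← sum_timeMarg q 0]
  exact Finset.sum_congr rfl fun a _ => timeMarg_projR_zero href q a

lemma inPiN_projR [Nonempty X] {p0 p1 : X → ℝ} {qref q : Traj X N → ℝ} (href : ∀ ω, 0 < qref ω)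
    (hq : InPiN p0 p1 q) (hqpos : ∀ ω, 0 < q ω) : InPiN p0 p1 (projR qref q) := by
  obtain ⟨⟨hnn, hsum⟩, h0, h1⟩ := hq
  refine ⟨⟨fun ω => (projR_pos href hqpos ω).le, by rw [sum_projR href, hsum]⟩, ?_, ?_⟩
  · intro x; rw [timeMarg_projR_zero href, h0]
  · intro x; rw [timeMarg_projR_last href, h1]

lemma projR_self [Nonempty X] {qref : Traj X N → ℝ} (href : ∀ ω, 0 < qref ω) (ω : Traj X N) :
    qref ω = projR qref qref ω := by
  rw [projR_apply, div_mul_cancel₀ _ (endMarg_pos href _ _).ne']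

end PartE

section PartF
variable {X : Type*} [Fintype X] [DecidableEq X] {N : ℕ}

lemma kl_term_ge {a b : ℝ} (ha : 0 ≤ a) (hb : 0 < b) : a - b ≤ a * Real.log (a / b) := by
  rcases eq_or_lt_of_le ha with h | h
  · rw [← h]; simp [hb.le]
  · have hba : 0 < b / a := div_pos hb h
    have := Real.log_le_sub_one_of_pos hba
    have hlog : Real.log (a / b) = - Real.log (b / a) := by
      rw [← Real.log_inv, inv_div]
    rw [hlog]
    have h2 : b / a - 1 ≥ Real.log (b / a) := this
    nlinarith [mul_pos h hb, (add_div b a), mul_div_cancel₀ b h.ne']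
  
lemma kl_term_eq {a b : ℝ} (ha : 0 < a) (hb : 0 < b)
    (h : a * Real.log (a / b) = a - b) : a = b := by
  by_contra hne
  have hba : 0 < b / a := div_pos hb ha
  have hne1 : b / a ≠ 1 := by
    intro h1
    exact hne ((div_eq_one_iff_eq ha.ne').mp h1).symm
  have hstrict := Real.log_lt_sub_one_of_pos hba hne1
  have hlog : Real.log (a / b) = - Real.log (b / a) := by
    rw [← Real.log_inv, inv_div]
  rw [hlog] at h
  have : a * (b / a) = b := mul_div_cancel₀ b ha.ne' ▸ by field_simp
  nlinarith

lemma KLd_self {Z : Type*} [Fintype Z] (a : Z → ℝ) : KLd a a = 0 := by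
  refine Finset.sum_eq_zero fun z _ => ?_
  rcases eq_or_ne (a z) 0 with h | h
  · rw [h, zero_mul]
  · rw [div_self h, Real.log_one, mul_zero]

lemma KLd_nonneg' {Z : Type*} [Fintype Z] {a b : Z → ℝ} (ha : IsPMF a) (hb : IsPMF b)
    (hbpos : ∀ z, 0 < b z) : 0 ≤ KLd a b :=
  calc (0:ℝ) = ∑ z, (a z - b z) := by rw [Finset.sum_sub_distrib, ha.2, hb.2, sub_self]
  _ ≤ ∑ z, a z * Real.log (a z / b z) :=
      Finset.sum_le_sum fun z _ => kl_term_ge (ha.1 z) (hbpos z)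
  _ = KLd a b := rfl

lemma KLd_eq_zero_imp {Z : Type*} [Fintype Z] {a b : Z → ℝ} (ha : IsPMF a) (hb : IsPMF b)
    (hapos : ∀ z, 0 < a z) (hbpos : ∀ z, 0 < b z) (h : KLd a b = 0) : a = b := by
  have hterm : ∀ z ∈ Finset.univ, 0 ≤ a z * Real.log (a z / b z) - (a z - b z) :=
    fun z _ => sub_nonneg.mpr (kl_term_ge (ha.1 z) (hbpos z))
  have hsum : ∑ z, (a z * Real.log (a z / b z) - (a z - b z)) = 0 := by
    rw [Finset.sum_sub_distrib, Finset.sum_sub_distrib, ha.2, hb.2]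
    show KLd a b - (1 - 1) = 0
    rw [h]; ring
  have hz := (Finset.sum_eq_zero_iff_of_nonneg hterm).mp hsum
  funext z
  have := hz z (Finset.mem_univ z)
  exact kl_term_eq (hapos z) (hbpos z) (by linarith)

end PartF
section PartG
variable {X : Type*} [Fintype X] [DecidableEq X] {N : ℕ}

lemma KLd_eq_log_sub {Z : Type*} [Fintype Z] {a b : Z → ℝ} (hapos : ∀ z, 0 < a z)
    (hbpos : ∀ z, 0 < b z) : KLd a b = ∑ z, a z * (Real.log (a z) - Real.log (b z)) := by
  refine Finset.sum_congr rfl fun z _ => ?_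
  rw [Real.log_div (hapos z).ne' (hbpos z).ne']

/-- Pythagorean identity for the reciprocal projection. -/
lemma decompR [Nonempty X] {qref q m : Traj X N → ℝ} (href : ∀ ω, 0 < qref ω)
    (hqpos : ∀ ω, 0 < q ω) (hmpos : ∀ ω, 0 < m ω)
    (hm : ∀ ω, m ω = projR qref m ω) :
    KLd q m = KLd q (projR qref q) + KLd (projR qref q) m := by
  set pq := projR qref q with hpq
  have hpqpos : ∀ ω, 0 < pq ω := projR_pos href hqpos
  have φval : ∀ ω : Traj X N, Real.log (pq ω) - Real.log (m ω)
      = (fun a b => Real.log (endMarg q a b) - Real.log (endMarg m a b)) (ω 0)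
          (ω (Fin.last (N + 1))) := by
    intro ω
    dsimp only
    rw [hm ω, hpq, projR_apply, projR_apply,
      Real.log_mul (div_pos (href ω) (endMarg_pos href _ _)).ne' (endMarg_pos hqpos _ _).ne',
      Real.log_mul (div_pos (href ω) (endMarg_pos href _ _)).ne' (endMarg_pos hmpos _ _).ne']
    ring
  have key1 : KLd q m - KLd q pq = ∑ ω, q ω * (Real.log (pq ω) - Real.log (m ω)) := by
    rw [KLd_eq_log_sub hqpos hmpos, KLd_eq_log_sub hqpos hpqpos, ← Finset.sum_sub_distrib]
    exact Finset.sum_congr rfl fun ω _ => by ring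
  have key2 : KLd pq m = ∑ ω, pq ω * (Real.log (pq ω) - Real.log (m ω)) :=
    KLd_eq_log_sub hpqpos hmpos
  have e1 : ∑ ω, q ω * (Real.log (pq ω) - Real.log (m ω))
      = ∑ a, ∑ b, endMarg q a b * (Real.log (endMarg q a b) - Real.log (endMarg m a b)) := by
    simp only [φval]
    exact sum_mul_ends q (fun a b => Real.log (endMarg q a b) - Real.log (endMarg m a b))
  have e2 : ∑ ω, pq ω * (Real.log (pq ω) - Real.log (m ω))
      = ∑ a, ∑ b, endMarg q a b * (Real.log (endMarg q a b) - Real.log (endMarg m a b)) := by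
    simp only [φval]
    rw [sum_mul_ends pq (fun a b => Real.log (endMarg q a b) - Real.log (endMarg m a b))]
    exact Finset.sum_congr rfl fun a _ => Finset.sum_congr rfl fun b _ => by
      rw [hpq, endMarg_projR href]
  have := key1.trans (e1.trans e2.symm)
  rw [← key2] at this
  linarith

/-- Pythagorean identity for the Markovian projection. -/
lemma decompM [Nonempty X] {q m : Traj X N → ℝ} (hqpos : ∀ ω, 0 < q ω) (hmpos : ∀ ω, 0 < m ω)
    (hm : IsMarkov m) :
    KLd q m = KLd q (projM q) + KLd (projM q) m := by
  set pq := projM q with hpq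
  have hpqpos : ∀ ω, 0 < pq ω := projM_pos hqpos
  have φval : ∀ ω : Traj X N, Real.log (pq ω) - Real.log (m ω)
      = (Real.log (timeMarg q 0 (ω 0)) - Real.log (timeMarg m 0 (ω 0)))
        + ∑ n : Fin (N + 1), (Real.log (transP q n (ω n.castSucc) (ω n.succ))
            - Real.log (transP m n (ω n.castSucc) (ω n.succ))) := by
    intro ω
    rw [hm ω, hpq]
    simp only [projM]
    rw [Real.log_mul (timeMarg_pos hqpos 0 _).ne' (Finset.prod_pos fun n _ =>
        transP_pos hqpos n _ _).ne',
      Real.log_mul (timeMarg_pos hmpos 0 _).ne' (Finset.prod_pos fun n _ =>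
        transP_pos hmpos n _ _).ne',
      Real.log_prod (fun n _ => (transP_pos hqpos n _ _).ne'),
      Real.log_prod (fun n _ => (transP_pos hmpos n _ _).ne')]
    rw [Finset.sum_sub_distrib]
    ring
  -- expectation of φ under any process r with the same time and pair marginals as q
  have expect : ∀ r : Traj X N → ℝ, (∀ x, timeMarg r 0 x = timeMarg q 0 x) →
      (∀ n y z, pairMarg r n y z = pairMarg q n y z) →
      ∑ ω, r ω * (Real.log (pq ω) - Real.log (m ω))
      = (∑ x, timeMarg q 0 x * (Real.log (timeMarg q 0 x) - Real.log (timeMarg m 0 x)))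
        + ∑ n : Fin (N + 1), ∑ y, ∑ z, pairMarg q n y z *
            (Real.log (transP q n y z) - Real.log (transP m n y z)) := by
    intro r h0 hpair
    simp only [φval]
    simp only [mul_add, Finset.mul_sum]
    rw [Finset.sum_add_distrib]
    congr 1
    · rw [sum_mul_coord r 0 (fun x => Real.log (timeMarg q 0 x) - Real.log (timeMarg m 0 x))]
      exact Finset.sum_congr rfl fun x _ => by rw [h0]
    · rw [Finset.sum_comm]
      refine Finset.sum_congr rfl fun n _ => ?_
      rw [sum_mul_pair r n (fun y z => Real.log (transP q n y z) - Real.log (transP m n y z))]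
      exact Finset.sum_congr rfl fun y _ => Finset.sum_congr rfl fun z _ => by rw [hpair]
  have key1 : KLd q m - KLd q pq = ∑ ω, q ω * (Real.log (pq ω) - Real.log (m ω)) := by
    rw [KLd_eq_log_sub hqpos hmpos, KLd_eq_log_sub hqpos hpqpos, ← Finset.sum_sub_distrib]
    exact Finset.sum_congr rfl fun ω _ => by ring
  have key2 : KLd pq m = ∑ ω, pq ω * (Real.log (pq ω) - Real.log (m ω)) :=
    KLd_eq_log_sub hpqpos hmpos
  have e1 := expect q (fun _ => rfl) (fun _ _ _ => rfl)
  have e2 := expect pq (fun x => timeMarg_projM hqpos 0 x)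
    (fun n y z => pairMarg_projM hqpos n y z)
  have := key1.trans (e1.trans e2.symm)
  rw [← key2] at this
  linarith

end PartG
section PartH
variable {X : Type*} [Fintype X] [DecidableEq X] {N : ℕ}

lemma projR_glue_ge [Nonempty X] {qref q : Traj X N → ℝ} {c : ℝ}
    (hcle : ∀ ω, c ≤ qref ω) (href : ∀ ω, 0 < qref ω) (hrefpmf : IsPMF qref)
    (hq : ∀ ω, 0 ≤ q ω) (a : X) (v : Fin N → X) (b : X) :
    c * endMarg q a b ≤ projR qref q (glue a v b) := by
  rw [projR_glue]
  have hr : endMarg qref a b ≤ 1 := by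
    have := endMarg_le_sum (fun ω => (href ω).le) a b
    rw [hrefpmf.2] at this; exact this
  have hrpos : 0 < endMarg qref a b := endMarg_pos href a b
  have h1 : c ≤ qref (glue a v b) / endMarg qref a b := by
    calc c ≤ qref (glue a v b) := hcle _
    _ ≤ qref (glue a v b) / endMarg qref a b := by
        rw [le_div_iff₀ hrpos]
        exact mul_le_of_le_one_right (href _).le hr
  exact mul_le_mul_of_nonneg_right h1 (endMarg_nonneg hq a b)

lemma triple_sum_ite_nonneg {q' : Traj X N → ℝ} (h : ∀ ω, 0 ≤ q' ω) (cond : Traj X N → Prop)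
    [DecidablePred cond] : ∀ a v b, (0:ℝ) ≤ if cond (glue a v b) then q' (glue a v b) else 0 := by
  intro a v b; split <;> [exact h _; exact le_rfl]

/-- The crucial uniform lower bound on the pair marginals of a reciprocal projection. -/
lemma pairMarg_projR_lb [Nonempty X] (hN : 1 ≤ N) {qref q : Traj X N → ℝ} {c : ℝ}
    (hcle : ∀ ω, c ≤ qref ω) (hc : 0 < c) (href : ∀ ω, 0 < qref ω) (hrefpmf : IsPMF qref)
    (hq : IsPMF q) (n : Fin (N + 1)) (y z : X) :
    c * min (timeMarg q 0 y) (min (timeMarg q (Fin.last (N + 1)) z) 1)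
      ≤ pairMarg (projR qref q) n y z := by
  have hq'nn : ∀ ω, 0 ≤ projR qref q ω := fun ω =>
    mul_nonneg (div_nonneg (href ω).le (endMarg_nonneg (fun σ => (href σ).le) _ _))
      (endMarg_nonneg hq.1 _ _)
  have base : pairMarg (projR qref q) n y z
      = ∑ a, ∑ v : Fin N → X, ∑ b,
          (if glue a v b n.castSucc = y ∧ glue a v b n.succ = z
            then projR qref q (glue a v b) else 0) := by
    rw [pairMarg, sum_traj]
  have innNN : ∀ (a : X) (v : Fin N → X) (b : X),
      (0:ℝ) ≤ (if glue a v b n.castSucc = y ∧ glue a v b n.succ = z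
          then projR qref q (glue a v b) else 0) := by
    intro a v b; split <;> [exact hq'nn _; exact le_rfl]
  rcases eq_or_ne n 0 with hn0 | hn0
  · -- n = 0 : bound by c * timeMarg q 0 y
    subst hn0
    have j0 : Fin N := ⟨0, hN⟩
    have hidx : ∀ (a : X) (v : Fin N → X) (b : X),
        glue a v b (0 : Fin (N + 1)).castSucc = a ∧
          glue a v b (0 : Fin (N + 1)).succ = v ⟨0, hN⟩ := by
      intro a v b
      constructor
      · rw [show (0 : Fin (N + 1)).castSucc = 0 from rfl, glue_zero]
      · rw [show (0 : Fin (N + 1)).succ = (⟨0, hN⟩ : Fin N).succ.castSucc from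
          Fin.ext (by simp), glue_inner]
    calc c * min (timeMarg q 0 y) (min (timeMarg q (Fin.last (N + 1)) z) 1)
        ≤ c * timeMarg q 0 y := by
          apply mul_le_mul_of_nonneg_left (min_le_left _ _) hc.le
      _ = ∑ b, c * endMarg q y b := by
          rw [← Finset.mul_sum, sum_endMarg_snd]
      _ ≤ ∑ b, (if glue y (fun _ => z) b (0 : Fin (N + 1)).castSucc = y ∧
            glue y (fun _ => z) b (0 : Fin (N + 1)).succ = z
            then projR qref q (glue y (fun _ => z) b) else 0) := by
          refine Finset.sum_le_sum fun b _ => ?_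
          rw [if_pos ⟨(hidx y _ b).1, (hidx y _ b).2⟩]
          exact projR_glue_ge hcle href hrefpmf hq.1 y _ b
      _ ≤ ∑ v : Fin N → X, ∑ b,
            (if glue y v b (0 : Fin (N + 1)).castSucc = y ∧
              glue y v b (0 : Fin (N + 1)).succ = z
              then projR qref q (glue y v b) else 0) := by
          exact Finset.single_le_sum (f := fun v => ∑ b,
            (if glue y v b (0 : Fin (N + 1)).castSucc = y ∧
              glue y v b (0 : Fin (N + 1)).succ = z
              then projR qref q (glue y v b) else 0))
            (fun v _ => Finset.sum_nonneg fun b _ => innNN y v b) (Finset.mem_univ _)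
      _ ≤ pairMarg (projR qref q) (0 : Fin (N + 1)) y z := by
          rw [base]
          exact Finset.single_le_sum (f := fun a => ∑ v : Fin N → X, ∑ b,
            (if glue a v b (0 : Fin (N + 1)).castSucc = y ∧
              glue a v b (0 : Fin (N + 1)).succ = z
              then projR qref q (glue a v b) else 0))
            (fun a _ => Finset.sum_nonneg fun v _ => Finset.sum_nonneg fun b _ => innNN a v b)
            (Finset.mem_univ _)
  rcases eq_or_ne n (Fin.last N) with hnl | hnl
  · -- n = last : bound by c * timeMarg q last z
    subst hnl
    have hidx : ∀ (a : X) (b : X),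
        glue a (fun _ => y) b (Fin.last N).castSucc = y ∧
          glue a (fun _ => y) b (Fin.last N).succ = b := by
      intro a b
      constructor
      · rw [show (Fin.last N).castSucc = (⟨N - 1, by omega⟩ : Fin N).succ.castSucc from
          Fin.ext (by simp; omega), glue_inner]
      · rw [Fin.succ_last, glue_last]
    calc c * min (timeMarg q 0 y) (min (timeMarg q (Fin.last (N + 1)) z) 1)
        ≤ c * timeMarg q (Fin.last (N + 1)) z := by
          refine mul_le_mul_of_nonneg_left ((min_le_right _ _).trans (min_le_left _ _)) hc.le
      _ = ∑ a, c * endMarg q a z := by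
          rw [← Finset.mul_sum, sum_endMarg_fst]
      _ ≤ ∑ a, (if glue a (fun _ => y) z (Fin.last N).castSucc = y ∧
            glue a (fun _ => y) z (Fin.last N).succ = z
            then projR qref q (glue a (fun _ => y) z) else 0) := by
          refine Finset.sum_le_sum fun a _ => ?_
          rw [if_pos ⟨(hidx a z).1, (hidx a z).2⟩]
          exact projR_glue_ge hcle href hrefpmf hq.1 a _ z
      _ ≤ pairMarg (projR qref q) (Fin.last N) y z := by
          rw [base]
          refine Finset.sum_le_sum fun a _ => ?_
          calc (if glue a (fun _ => y) z (Fin.last N).castSucc = y ∧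
              glue a (fun _ => y) z (Fin.last N).succ = z
              then projR qref q (glue a (fun _ => y) z) else 0)
              ≤ ∑ b, (if glue a (fun _ => y) b (Fin.last N).castSucc = y ∧
                glue a (fun _ => y) b (Fin.last N).succ = z
                then projR qref q (glue a (fun _ => y) b) else 0) :=
                Finset.single_le_sum (f := fun b => (if glue a (fun _ => y) b
                    (Fin.last N).castSucc = y ∧ glue a (fun _ => y) b (Fin.last N).succ = z
                  then projR qref q (glue a (fun _ => y) b) else 0))
                  (fun b _ => innNN a _ b) (Finset.mem_univ _)
            _ ≤ ∑ v : Fin N → X, ∑ b, (if glue a v b (Fin.last N).castSucc = y ∧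
                glue a v b (Fin.last N).succ = z
                then projR qref q (glue a v b) else 0) :=
                Finset.single_le_sum (f := fun v => ∑ b, (if glue a v b
                    (Fin.last N).castSucc = y ∧ glue a v b (Fin.last N).succ = z
                  then projR qref q (glue a v b) else 0))
                  (fun v _ => Finset.sum_nonneg fun b _ => innNN a v b) (Finset.mem_univ _)
  · -- inner case
    have hn1 : 1 ≤ (n : ℕ) := by
      rcases Nat.eq_zero_or_pos (n : ℕ) with h | h
      · exact absurd (Fin.ext h) hn0
      · exact h
    have hnN : (n : ℕ) < N := by
      have := n.isLt
      rcases Nat.lt_or_ge (n : ℕ) N with h | h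
      · exact h
      · exact absurd (Fin.ext (by omega : (n : ℕ) = N)) hnl
    set j1 : Fin N := ⟨(n : ℕ) - 1, by omega⟩ with hj1
    set j2 : Fin N := ⟨(n : ℕ), hnN⟩ with hj2
    have hj12 : j1 ≠ j2 := by
      intro h
      have := congrArg Fin.val h
      simp [hj1, hj2] at this
      omega
    set v0 : Fin N → X := fun j => if j = j2 then z else y with hv0
    have hidx : ∀ (a : X) (b : X),
        glue a v0 b n.castSucc = y ∧ glue a v0 b n.succ = z := by
      intro a b
      constructor
      · rw [show n.castSucc = j1.succ.castSucc from Fin.ext (by simp [hj1]; omega), glue_inner,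
          hv0]
        simp [hj12]
      · rw [show n.succ = j2.succ.castSucc from Fin.ext (by simp [hj2]), glue_inner, hv0]
        simp
    have hsum1 : ∑ a, ∑ b, endMarg q a b = 1 := by
      have : ∀ a, ∑ b, endMarg q a b = timeMarg q 0 a := fun a => sum_endMarg_snd q a
      simp only [this]
      rw [sum_timeMarg, hq.2]
    calc c * min (timeMarg q 0 y) (min (timeMarg q (Fin.last (N + 1)) z) 1)
        ≤ c * 1 := by
          refine mul_le_mul_of_nonneg_left ((min_le_right _ _).trans (min_le_right _ _)) hc.le
      _ = ∑ a, ∑ b, c * endMarg q a b := by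
          rw [← hsum1, Finset.mul_sum]
          exact Finset.sum_congr rfl fun a _ => by rw [Finset.mul_sum]
      _ ≤ ∑ a, ∑ b, (if glue a v0 b n.castSucc = y ∧ glue a v0 b n.succ = z
            then projR qref q (glue a v0 b) else 0) := by
          refine Finset.sum_le_sum fun a _ => Finset.sum_le_sum fun b _ => ?_
          rw [if_pos (hidx a b)]
          exact projR_glue_ge hcle href hrefpmf hq.1 a v0 b
      _ ≤ pairMarg (projR qref q) n y z := by
          rw [base]
          refine Finset.sum_le_sum fun a _ => ?_
          refine Finset.single_le_sum (f := fun v => ∑ b, (if glue a v b n.castSucc = y ∧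
              glue a v b n.succ = z then projR qref q (glue a v b) else 0))
            (fun v _ => Finset.sum_nonneg fun b _ => innNN a v b) (Finset.mem_univ v0)

end PartH
section PartI
variable {X : Type*} [Fintype X] [DecidableEq X] {N : ℕ}

/-- Constant-inner-path through `x0`. -/
def cpath (x0 a b : X) : Traj X N := glue a (fun _ => x0) b

lemma cpath_agree (hN : 1 ≤ N) (x0 a a' b : X) (i : Fin (N + 2)) (hi : i ≠ 0) :
    (cpath x0 a b : Traj X N) i = (cpath x0 a' b : Traj X N) i := by
  obtain ⟨j, rfl⟩ := Fin.eq_succ_of_ne_zero hi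
  rw [cpath, cpath, glue_succ, glue_succ]

/-- Factorization of a full-support Markov process along the constant path. -/
lemma markov_cpath_factor [Nonempty X] (hN : 1 ≤ N) {m : Traj X N → ℝ}
    (hmpos : ∀ ω, 0 < m ω) (hm : IsMarkov m) (x0 a b : X) :
    m (cpath x0 a b) = (timeMarg m 0 a * transP m 0 a x0) *
      ∏ i : Fin N,
        transP m i.succ ((cpath x0 x0 b : Traj X N) i.succ.castSucc)
          ((cpath x0 x0 b : Traj X N) i.succ.succ) := by
  rw [hm (cpath x0 a b)]
  rw [show (cpath x0 a b : Traj X N) 0 = a from glue_zero _ _ _]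
  rw [Fin.prod_univ_succ]
  have h0c : (cpath x0 a b : Traj X N) (0 : Fin (N + 1)).castSucc = a := glue_zero _ _ _
  have h0s : (cpath x0 a b : Traj X N) (0 : Fin (N + 1)).succ = x0 := by
    rw [show (0 : Fin (N + 1)).succ = (⟨0, hN⟩ : Fin N).succ.castSucc from Fin.ext (by simp),
      cpath, glue_inner]
  rw [h0c, h0s]
  have hrest : (∏ i : Fin N, transP m i.succ ((cpath x0 a b : Traj X N) i.succ.castSucc)
        ((cpath x0 a b : Traj X N) i.succ.succ))
      = ∏ i : Fin N, transP m i.succ ((cpath x0 x0 b : Traj X N) i.succ.castSucc)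
        ((cpath x0 x0 b : Traj X N) i.succ.succ) := by
    refine Finset.prod_congr rfl fun i _ => ?_
    rw [cpath_agree hN x0 a x0 b i.succ.castSucc (by simp [Fin.castSucc_eq_zero_iff]),
      cpath_agree hN x0 a x0 b i.succ.succ (Fin.succ_ne_zero _)]
  rw [hrest, mul_assoc]

lemma markov_fourpoint [Nonempty X] (hN : 1 ≤ N) {m : Traj X N → ℝ}
    (hmpos : ∀ ω, 0 < m ω) (hm : IsMarkov m) (x0 a b : X) :
    m (cpath x0 a b) * m (cpath x0 x0 x0) = m (cpath x0 a x0) * m (cpath x0 x0 b) := by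
  rw [markov_cpath_factor hN hmpos hm x0 a b, markov_cpath_factor hN hmpos hm x0 a x0,
    markov_cpath_factor hN hmpos hm x0 x0 b, markov_cpath_factor hN hmpos hm x0 x0 x0]
  ring

/-- A full-support Markov process fixed by the reciprocal projection has a product density
w.r.t. `qref`. -/
lemma schrodinger_structure [Nonempty X] (hN : 1 ≤ N) {qref w : Traj X N → ℝ}
    (href : ∀ ω, 0 < qref ω) (hrefM : IsMarkov qref) (hwpos : ∀ ω, 0 < w ω)
    (hwR : ∀ ω, w ω = projR qref w ω) (hwM : IsMarkov w) :
    ∃ u v : X → ℝ, (∀ x, 0 < u x) ∧ (∀ x, 0 < v x) ∧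
      ∀ ω : Traj X N, w ω = qref ω * (u (ω 0) * v (ω (Fin.last (N + 1)))) := by
  obtain ⟨x0⟩ := ‹Nonempty X›
  refine ⟨fun a => w (cpath x0 a x0) * qref (cpath x0 x0 x0) /
    (qref (cpath x0 a x0) * w (cpath x0 x0 x0)),
    fun b => w (cpath x0 x0 b) / qref (cpath x0 x0 b), ?_, ?_, ?_⟩
  · intro a
    exact div_pos (mul_pos (hwpos _) (href _)) (mul_pos (href _) (hwpos _))
  · intro b
    exact div_pos (hwpos _) (href _)
  · intro ω
    -- ratio identity : w σ * endMarg qref e = qref σ * endMarg w e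
    have ratio : ∀ σ : Traj X N, w σ * endMarg qref (σ 0) (σ (Fin.last (N + 1)))
        = qref σ * endMarg w (σ 0) (σ (Fin.last (N + 1))) := by
      intro σ
      have hr : endMarg qref (σ 0) (σ (Fin.last (N + 1))) ≠ 0 :=
        (endMarg_pos href _ _).ne'
      rw [hwR σ, projR_apply]
      field_simp
    have h4w := markov_fourpoint hN hwpos hwM x0 (ω 0) (ω (Fin.last (N + 1)))
    have h4r := markov_fourpoint hN href hrefM x0 (ω 0) (ω (Fin.last (N + 1)))
    set a := ω 0
    set b := ω (Fin.last (N + 1))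
    have hends : ∀ a' b' : X, (cpath x0 a' b' : Traj X N) 0 = a' ∧
        (cpath x0 a' b' : Traj X N) (Fin.last (N + 1)) = b' :=
      fun a' b' => ⟨glue_zero _ _ _, glue_last _ _ _⟩
    have rab := ratio (cpath x0 a b)
    rw [(hends a b).1, (hends a b).2] at rab
    have main := ratio ω
    have hr := endMarg_pos href a b
    have p2 := href (cpath x0 a x0); have p3 := href (cpath x0 x0 b)
    have p4 := href (cpath x0 x0 x0); have p1 := href (cpath x0 a b)
    have q4 := hwpos (cpath x0 x0 x0)
    -- cross identity
    have cross : w (cpath x0 a b) * (qref (cpath x0 a x0) * w (cpath x0 x0 x0) *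
          qref (cpath x0 x0 b))
        = qref (cpath x0 a b) * (w (cpath x0 a x0) * qref (cpath x0 x0 x0) *
          w (cpath x0 x0 b)) := by
      linear_combination (qref (cpath x0 a x0) * qref (cpath x0 x0 b)) * h4w
        - (w (cpath x0 a x0) * w (cpath x0 x0 b)) * h4r
    have huv : (w (cpath x0 a x0) * qref (cpath x0 x0 x0) /
          (qref (cpath x0 a x0) * w (cpath x0 x0 x0))) *
        (w (cpath x0 x0 b) / qref (cpath x0 x0 b))
        = w (cpath x0 a b) / qref (cpath x0 a b) := by
      rw [div_mul_div_comm, div_eq_div_iff (by positivity) p1.ne']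
      linear_combination - cross
    -- cancel r from `main` using `rab`
    have step1 : w ω * endMarg qref a b * qref (cpath x0 a b)
        = qref ω * w (cpath x0 a b) * endMarg qref a b := by
      rw [main]
      linear_combination (-(qref ω)) * rab
    have step2 : w ω * qref (cpath x0 a b) = qref ω * w (cpath x0 a b) :=
      mul_right_cancel₀ hr.ne' (by linear_combination step1)
    rw [huv, eq_comm, ← mul_div_assoc, div_eq_iff p1.ne']
    linarith [step2]

end PartI
section PartJ
variable {X : Type*} [Fintype X] [DecidableEq X] {N : ℕ}

/-- The minimality of a full-support Markov process fixed by the reciprocal projection. -/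
lemma schrodinger_min [Nonempty X] (hN : 1 ≤ N) {qref w : Traj X N → ℝ}
    (href : ∀ ω, 0 < qref ω) (hrefM : IsMarkov qref) (hw : IsPMF w) (hwpos : ∀ ω, 0 < w ω)
    (hwR : ∀ ω, w ω = projR qref w ω) (hwM : IsMarkov w)
    {q' : Traj X N → ℝ} (hq' : IsPMF q')
    (h0 : ∀ x, timeMarg q' 0 x = timeMarg w 0 x)
    (h1 : ∀ x, timeMarg q' (Fin.last (N + 1)) x = timeMarg w (Fin.last (N + 1)) x) :
    KLd w qref ≤ KLd q' qref := by
  obtain ⟨u, v, hu, hv, hfac⟩ := schrodinger_structure hN href hrefM hwpos hwR hwM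
  have hsplit : ∀ r : Traj X N → ℝ, (∀ ω, 0 ≤ r ω) →
      KLd r qref = KLd r w +
        ∑ ω, r ω * (Real.log (u (ω 0)) + Real.log (v (ω (Fin.last (N + 1))))) := by
    intro r hr
    rw [KLd, KLd, ← Finset.sum_add_distrib]
    refine Finset.sum_congr rfl fun ω _ => ?_
    rcases eq_or_ne (r ω) 0 with h | h
    · rw [h]; ring
    · have hrpos : 0 < r ω := lt_of_le_of_ne (hr ω) (Ne.symm h)
      have hwq : w ω / qref ω = u (ω 0) * v (ω (Fin.last (N + 1))) := by
        rw [hfac ω]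
        exact mul_div_cancel_left₀ _ (href ω).ne'
      have hdd : r ω / qref ω = (r ω / w ω) * (w ω / qref ω) := by
        rw [div_mul_div_comm]
        rw [mul_comm (w ω) (qref ω), mul_div_mul_right _ _ (hwpos ω).ne']
      have : Real.log (r ω / qref ω) = Real.log (r ω / w ω) +
          (Real.log (u (ω 0)) + Real.log (v (ω (Fin.last (N + 1))))) := by
        rw [hdd, Real.log_mul (div_pos hrpos (hwpos ω)).ne' (div_pos (hwpos ω) (href ω)).ne',
          hwq, Real.log_mul (hu _).ne' (hv _).ne']
      rw [this]; ring
  have hmean : ∀ r : Traj X N → ℝ,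
      (∑ ω, r ω * (Real.log (u (ω 0)) + Real.log (v (ω (Fin.last (N + 1))))))
        = (∑ x, timeMarg r 0 x * Real.log (u x))
          + ∑ x, timeMarg r (Fin.last (N + 1)) x * Real.log (v x) := by
    intro r
    simp only [mul_add]
    rw [Finset.sum_add_distrib, sum_mul_coord r 0 (fun x => Real.log (u x)),
      sum_mul_coord r (Fin.last (N + 1)) (fun x => Real.log (v x))]
  have e1 := hsplit q' hq'.1
  have e2 := hsplit w (fun ω => (hwpos ω).le)
  rw [hmean q'] at e1
  rw [hmean w, KLd_self] at e2
  have hmarg : (∑ x, timeMarg q' 0 x * Real.log (u x))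
      + (∑ x, timeMarg q' (Fin.last (N + 1)) x * Real.log (v x))
      = (∑ x, timeMarg w 0 x * Real.log (u x))
        + ∑ x, timeMarg w (Fin.last (N + 1)) x * Real.log (v x) := by
    congr 1
    · exact Finset.sum_congr rfl fun x _ => by rw [h0]
    · exact Finset.sum_congr rfl fun x _ => by rw [h1]
  have hKL := KLd_nonneg' hq' hw hwpos
  linarith [e1, e2, hmarg, hKL]

/-- Continuity of KL divergence under pointwise convergence to positive limits. -/
lemma tendsto_KLd {Z : Type*} [Fintype Z] {A B : ℕ → Z → ℝ} {A' B' : Z → ℝ}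
    (hA : ∀ z, Filter.Tendsto (fun k => A k z) Filter.atTop (nhds (A' z)))
    (hB : ∀ z, Filter.Tendsto (fun k => B k z) Filter.atTop (nhds (B' z)))
    (hApos : ∀ z, 0 < A' z) (hBpos : ∀ z, 0 < B' z) :
    Filter.Tendsto (fun k => KLd (A k) (B k)) Filter.atTop (nhds (KLd A' B')) := by
  rw [show KLd A' B' = ∑ z, A' z * Real.log (A' z / B' z) from rfl]
  refine tendsto_finset_sum _ fun z _ => ?_
  refine Filter.Tendsto.mul (hA z) ?_
  have hdiv : Filter.Tendsto (fun k => A k z / B k z) Filter.atTop (nhds (A' z / B' z)) :=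
    (hA z).div (hB z) (hBpos z).ne'
  exact ((Real.continuousAt_log (div_pos (hApos z) (hBpos z)).ne').tendsto).comp hdiv

lemma pmf_le_one {Z : Type*} [Fintype Z] {q : Z → ℝ} (hq : IsPMF q) (z : Z) : q z ≤ 1 := by
  rw [← hq.2]
  exact Finset.single_le_sum (fun w _ => hq.1 w) (Finset.mem_univ z)

lemma transP_ge {q : Traj X N → ℝ} (hq : IsPMF q) {δ : ℝ} (hδ : 0 ≤ δ) {n : Fin (N + 1)}
    {y z : X} (hpair : δ ≤ pairMarg q n y z) (htpos : 0 < timeMarg q n.castSucc y) :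
    δ ≤ transP q n y z := by
  have ht1 : timeMarg q n.castSucc y ≤ 1 := by
    have := timeMarg_le_sum hq.1 n.castSucc y
    rw [hq.2] at this; exact this
  rw [transP, le_div_iff₀ htpos]
  calc δ * timeMarg q n.castSucc y ≤ δ * 1 := by
        exact mul_le_mul_of_nonneg_left ht1 hδ
    _ = δ := mul_one δ
    _ ≤ pairMarg q n y z := hpair

end PartJ
/-- Convergence of the D-IMF procedure on discrete spaces. Starting from
a full-support `q^0 ∈ Π_N(p_0, p_1)` and alternating reciprocal and Markovian projections,
every iterate stays in `Π_N(p_0, p_1)` and `KL(q^l ‖ q*) → 0`, where `q*` is the unique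
minimizer of `KL(· ‖ q^ref)` over `Π_N(p_0, p_1)`. -/
theorem dimf_convergence
    {X : Type*} [Fintype X] [DecidableEq X] [Nonempty X] {N : ℕ} (hN : 1 ≤ N)
    (p0 p1 : X → ℝ) (hp0 : IsPMF p0) (hp0pos : ∀ x, 0 < p0 x)
    (hp1 : IsPMF p1) (hp1pos : ∀ x, 0 < p1 x)
    (qref : Traj X N → ℝ) (hqref : IsPMF qref) (hqrefpos : ∀ ω, 0 < qref ω)
    (hqrefM : IsMarkov qref)
    (q0 : Traj X N → ℝ) (hq0 : InPiN p0 p1 q0) (hq0pos : ∀ ω, 0 < q0 ω)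
    (Q : ℕ → Traj X N → ℝ) (hQ0 : Q 0 = q0)
    (hQodd : ∀ l : ℕ, Q (2 * l + 1) = projR qref (Q (2 * l)))
    (hQeven : ∀ l : ℕ, Q (2 * l + 2) = projM (Q (2 * l + 1)))
    (qs : Traj X N → ℝ) (hqs : InPiN p0 p1 qs)
    (hqsmin : ∀ q : Traj X N → ℝ, InPiN p0 p1 q → KLd qs qref ≤ KLd q qref)
    (hqsuniq : ∀ q : Traj X N → ℝ, InPiN p0 p1 q →
      (∀ q' : Traj X N → ℝ, InPiN p0 p1 q' → KLd q qref ≤ KLd q' qref) → q = qs) :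
    (∀ l : ℕ, InPiN p0 p1 (Q l)) ∧
    Filter.Tendsto (fun l : ℕ => KLd (Q l) qs) Filter.atTop (nhds 0) := by
  classical
  -- Step 1: every iterate is a full-support element of Π_N
  have goodRec : ∀ k : ℕ, (InPiN p0 p1 (Q (2 * k)) ∧ ∀ ω, 0 < Q (2 * k) ω) ∧
      (InPiN p0 p1 (Q (2 * k + 1)) ∧ ∀ ω, 0 < Q (2 * k + 1) ω) := by
    intro k
    induction k with
    | zero =>
      constructor
      · rw [show 2 * 0 = 0 from rfl, hQ0]; exact ⟨hq0, hq0pos⟩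
      · rw [hQodd 0, show 2 * 0 = 0 from rfl, hQ0]
        exact ⟨inPiN_projR hqrefpos hq0 hq0pos, projR_pos hqrefpos hq0pos⟩
    | succ k IH =>
      have h2 : InPiN p0 p1 (Q (2 * k + 2)) ∧ ∀ ω, 0 < Q (2 * k + 2) ω := by
        rw [hQeven k]
        exact ⟨inPiN_projM IH.2.1 IH.2.2, projM_pos IH.2.2⟩
      constructor
      · rw [show 2 * (k + 1) = 2 * k + 2 by ring]; exact h2
      · have hodd := hQodd (k + 1)
        rw [show 2 * (k + 1) = 2 * k + 2 by ring] at hodd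
        rw [show 2 * (k + 1) + 1 = 2 * k + 2 + 1 by ring, hodd]
        exact ⟨inPiN_projR hqrefpos h2.1 h2.2, projR_pos hqrefpos h2.2⟩
  have good : ∀ l : ℕ, InPiN p0 p1 (Q l) ∧ ∀ ω, 0 < Q l ω := by
    intro l
    rcases Nat.even_or_odd l with ⟨k, hk⟩ | ⟨k, hk⟩
    · rw [show l = 2 * k by omega]; exact (goodRec k).1
    · rw [show l = 2 * k + 1 by omega]; exact (goodRec k).2
  refine ⟨fun l => (good l).1, ?_⟩
  -- Step 2: the successor of each iterate is one of the projections
  have hsucc : ∀ l : ℕ, (Q (l + 1) = projR qref (Q l)) ∨ (Q (l + 1) = projM (Q l)) := by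
    intro l
    rcases Nat.even_or_odd l with ⟨k, hk⟩ | ⟨k, hk⟩
    · left
      have := hQodd k
      rw [show 2 * k + 1 = l + 1 by omega, show 2 * k = l by omega] at this
      exact this
    · right
      have := hQeven k
      rw [show 2 * k + 2 = l + 1 by omega, show 2 * k + 1 = l by omega] at this
      exact this
  -- Step 3: the fundamental one-step identity for any projR-fixed, Markov target
  have hstep : ∀ (m : Traj X N → ℝ), (∀ ω, 0 < m ω) → (∀ ω, m ω = projR qref m ω) →
      IsMarkov m → ∀ l, KLd (Q l) m = KLd (Q l) (Q (l + 1)) + KLd (Q (l + 1)) m := by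
    intro m hmpos hmR hmM l
    rcases hsucc l with h | h <;> rw [h]
    · exact decompR hqrefpos (good l).2 hmpos hmR
    · exact decompM (good l).2 hmpos hmM
  have hgnonneg : ∀ l, 0 ≤ KLd (Q l) (Q (l + 1)) :=
    fun l => KLd_nonneg' (good l).1.1 (good (l + 1)).1.1 (good (l + 1)).2
  -- Step 4: the gaps tend to zero
  have hQstep := hstep qref hqrefpos (fun ω => projR_self hqrefpos ω) hqrefM
  have hDanti : ∀ l, KLd (Q (l + 1)) qref ≤ KLd (Q l) qref :=
    fun l => by linarith [hQstep l, hgnonneg l]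
  have hDlb : ∀ l, 0 ≤ KLd (Q l) qref :=
    fun l => KLd_nonneg' (good l).1.1 hqref hqrefpos
  have hDbdd : BddBelow (Set.range fun l => KLd (Q l) qref) := by
    refine ⟨0, fun x hx => ?_⟩
    obtain ⟨l, rfl⟩ := hx
    exact hDlb l
  have hDconv : Filter.Tendsto (fun l => KLd (Q l) qref) Filter.atTop
      (nhds (⨅ l, KLd (Q l) qref)) :=
    tendsto_atTop_ciInf (antitone_nat_of_succ_le hDanti) hDbdd
  have hg0 : Filter.Tendsto (fun l => KLd (Q l) (Q (l + 1))) Filter.atTop (nhds 0) := by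
    have heq : (fun l => KLd (Q l) (Q (l + 1)))
        = fun l => KLd (Q l) qref - KLd (Q (l + 1)) qref :=
      funext fun l => by linarith [hQstep l]
    rw [heq, show (0:ℝ) = (⨅ l, KLd (Q l) qref) - (⨅ l, KLd (Q l) qref) by ring]
    exact hDconv.sub (hDconv.comp (Filter.tendsto_add_atTop_nat 1))
  -- Step 5: uniform lower bound on the even iterates
  obtain ⟨ωm, _, hωm⟩ := Finset.exists_min_image Finset.univ qref Finset.univ_nonempty
  set c : ℝ := qref ωm with hcdef
  have hc : 0 < c := hqrefpos ωm
  have hcle : ∀ ω, c ≤ qref ω := fun ω => hωm ω (Finset.mem_univ ω)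
  obtain ⟨xa, _, hxa⟩ := Finset.exists_min_image Finset.univ p0 Finset.univ_nonempty
  obtain ⟨xb, _, hxb⟩ := Finset.exists_min_image Finset.univ p1 Finset.univ_nonempty
  set δ : ℝ := c * min (p0 xa) (min (p1 xb) 1) with hδdef
  have hδ : 0 < δ := by
    apply mul_pos hc
    exact lt_min (hp0pos xa) (lt_min (hp1pos xb) one_pos)
  set δ2 : ℝ := p0 xa * δ ^ (N + 1) with hδ2def
  have hδ2 : 0 < δ2 := mul_pos (hp0pos xa) (pow_pos hδ _)
  have hylb : ∀ (k : ℕ) (ω : Traj X N), δ2 ≤ Q (2 * k + 2) ω := by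
    intro k ω
    have hg2k := (goodRec k).1
    have hg2k1 := (goodRec k).2
    have hpairlb : ∀ (n : Fin (N + 1)) (y z : X), δ ≤ pairMarg (Q (2 * k + 1)) n y z := by
      intro n y z
      rw [hQodd k]
      calc δ ≤ c * min (timeMarg (Q (2 * k)) 0 y)
            (min (timeMarg (Q (2 * k)) (Fin.last (N + 1)) z) 1) := by
            rw [hδdef]
            refine mul_le_mul_of_nonneg_left ?_ hc.le
            rw [hg2k.1.2.1 y, hg2k.1.2.2 z]
            exact min_le_min (hxa y (Finset.mem_univ y))
              (min_le_min (hxb z (Finset.mem_univ z)) le_rfl)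
        _ ≤ pairMarg (projR qref (Q (2 * k))) n y z :=
            pairMarg_projR_lb hN hcle hc hqrefpos hqref hg2k.1.1 n y z
    have htrans : ∀ (n : Fin (N + 1)) (y z : X), δ ≤ transP (Q (2 * k + 1)) n y z :=
      fun n y z => transP_ge hg2k1.1.1 hδ.le (hpairlb n y z)
        (timeMarg_pos hg2k1.2 n.castSucc y)
    rw [hQeven k, projM]
    have h1 : p0 xa ≤ timeMarg (Q (2 * k + 1)) 0 (ω 0) := by
      rw [hg2k1.1.2.1]
      exact hxa (ω 0) (Finset.mem_univ _)
    have h2 : δ ^ (N + 1) ≤ ∏ n : Fin (N + 1),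
        transP (Q (2 * k + 1)) n (ω n.castSucc) (ω n.succ) := by
      calc δ ^ (N + 1) = ∏ _n : Fin (N + 1), δ := by
            rw [Finset.prod_const, Finset.card_univ, Fintype.card_fin]
        _ ≤ _ := Finset.prod_le_prod (fun n _ => hδ.le) (fun n _ => htrans n _ _)
    calc δ2 = p0 xa * δ ^ (N + 1) := hδ2def
      _ ≤ timeMarg (Q (2 * k + 1)) 0 (ω 0) * ∏ n : Fin (N + 1),
            transP (Q (2 * k + 1)) n (ω n.castSucc) (ω n.succ) :=
          mul_le_mul h1 h2 (pow_pos hδ _).le (timeMarg_nonneg hg2k1.1.1.1 _ _)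
  -- Step 6: compactness, a convergent subsequence of the even iterates
  have hyS : ∀ k : ℕ, Q (2 * k + 2) ∈ Set.Icc (fun _ : Traj X N => δ2) (fun _ => (1:ℝ)) := by
    intro k
    constructor
    · intro ω; exact hylb k ω
    · intro ω; exact pmf_le_one (good (2 * k + 2)).1.1 ω
  obtain ⟨qoo, hqooS, φ, hφmono, hφtend⟩ :=
    (isCompact_Icc (a := fun _ : Traj X N => δ2) (b := fun _ => (1:ℝ))).tendsto_subseq hyS
  have hptw : ∀ ω, Filter.Tendsto (fun k => Q (2 * φ k + 2) ω) Filter.atTop (nhds (qoo ω)) :=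
    fun ω => (tendsto_pi_nhds.mp hφtend ω)
  have hqoopos : ∀ ω, 0 < qoo ω := fun ω => lt_of_lt_of_le hδ2 (hqooS.1 ω)
  -- limits of marginals
  have htm : ∀ (i : Fin (N + 2)) (x : X), Filter.Tendsto
      (fun k => timeMarg (Q (2 * φ k + 2)) i x) Filter.atTop (nhds (timeMarg qoo i x)) := by
    intro i x
    simp only [timeMarg]
    refine tendsto_finset_sum _ fun ω _ => ?_
    by_cases h : ω i = x
    · simpa [h] using hptw ω
    · simpa [h] using (tendsto_const_nhds : Filter.Tendsto _ Filter.atTop (nhds (0:ℝ)))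
  have hqoopmf : IsPMF qoo := by
    refine ⟨fun ω => (hqoopos ω).le, ?_⟩
    have h1 : Filter.Tendsto (fun k => ∑ ω, Q (2 * φ k + 2) ω) Filter.atTop
        (nhds (∑ ω, qoo ω)) := tendsto_finset_sum _ fun ω _ => hptw ω
    have h2 : (fun k => ∑ ω, Q (2 * φ k + 2) ω) = fun _ => (1:ℝ) :=
      funext fun k => (good (2 * φ k + 2)).1.1.2
    rw [h2] at h1
    exact tendsto_nhds_unique h1 tendsto_const_nhds
  have hqooPi : InPiN p0 p1 qoo := by
    refine ⟨hqoopmf, fun x => ?_, fun x => ?_⟩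
    · have h1 := htm 0 x
      have h2 : (fun k => timeMarg (Q (2 * φ k + 2)) 0 x) = fun _ => p0 x :=
        funext fun k => (good (2 * φ k + 2)).1.2.1 x
      rw [h2] at h1
      exact tendsto_nhds_unique h1 tendsto_const_nhds
    · have h1 := htm (Fin.last (N + 1)) x
      have h2 : (fun k => timeMarg (Q (2 * φ k + 2)) (Fin.last (N + 1)) x) = fun _ => p1 x :=
        funext fun k => (good (2 * φ k + 2)).1.2.2 x
      rw [h2] at h1
      exact tendsto_nhds_unique h1 tendsto_const_nhds
  -- limits of endpoint marginals and the reciprocal projection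
  have hem : ∀ (a b : X), Filter.Tendsto (fun k => endMarg (Q (2 * φ k + 2)) a b)
      Filter.atTop (nhds (endMarg qoo a b)) := by
    intro a b
    simp only [endMarg]
    refine tendsto_finset_sum _ fun ω _ => ?_
    by_cases h : ω 0 = a ∧ ω (Fin.last (N + 1)) = b
    · simpa [h] using hptw ω
    · simpa [h] using (tendsto_const_nhds : Filter.Tendsto _ Filter.atTop (nhds (0:ℝ)))
  have hRtend : ∀ ω, Filter.Tendsto (fun k => projR qref (Q (2 * φ k + 2)) ω)
      Filter.atTop (nhds (projR qref qoo ω)) := by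
    intro ω
    simp only [projR_apply]
    exact (hem (ω 0) (ω (Fin.last (N + 1)))).const_mul _
  -- subsequence indices tend to infinity
  have hidx : Filter.Tendsto (fun k => 2 * φ k + 2) Filter.atTop Filter.atTop := by
    refine Filter.tendsto_atTop_mono (fun k => ?_) Filter.tendsto_id
    have h : k ≤ φ k := hφmono.le_apply
    simp only [id_eq]
    omega
  -- the first gap along the subsequence
  have hgap1eq : ∀ k : ℕ, Q (2 * φ k + 2 + 1) = projR qref (Q (2 * φ k + 2)) := by
    intro k
    have := hQodd (φ k + 1)
    rw [show 2 * (φ k + 1) + 1 = 2 * φ k + 2 + 1 by ring,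
      show 2 * (φ k + 1) = 2 * φ k + 2 by ring] at this
    exact this
  have hfixR : qoo = projR qref qoo := by
    have hlim : Filter.Tendsto (fun k => KLd (Q (2 * φ k + 2)) (projR qref (Q (2 * φ k + 2))))
        Filter.atTop (nhds (KLd qoo (projR qref qoo))) :=
      tendsto_KLd hptw hRtend hqoopos (projR_pos hqrefpos hqoopos)
    have hzero : Filter.Tendsto (fun k => KLd (Q (2 * φ k + 2)) (Q (2 * φ k + 2 + 1)))
        Filter.atTop (nhds 0) := hg0.comp hidx
    have heq : (fun k => KLd (Q (2 * φ k + 2)) (Q (2 * φ k + 2 + 1)))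
        = fun k => KLd (Q (2 * φ k + 2)) (projR qref (Q (2 * φ k + 2))) :=
      funext fun k => by rw [hgap1eq k]
    rw [heq] at hzero
    have h0 : KLd qoo (projR qref qoo) = 0 := tendsto_nhds_unique hlim hzero
    refine KLd_eq_zero_imp hqoopmf ⟨fun ω => (projR_pos hqrefpos hqoopos ω).le, ?_⟩
      hqoopos (projR_pos hqrefpos hqoopos) h0
    rw [sum_projR hqrefpos, hqoopmf.2]
  -- second gap : limits of projM of the reciprocal projections
  have hAtm : ∀ (i : Fin (N + 2)) (x : X), Filter.Tendsto
      (fun k => timeMarg (projR qref (Q (2 * φ k + 2))) i x) Filter.atTop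
      (nhds (timeMarg (projR qref qoo) i x)) := by
    intro i x
    simp only [timeMarg]
    refine tendsto_finset_sum _ fun ω _ => ?_
    by_cases h : ω i = x
    · simpa [h] using hRtend ω
    · simpa [h] using (tendsto_const_nhds : Filter.Tendsto _ Filter.atTop (nhds (0:ℝ)))
  have hApm : ∀ (n : Fin (N + 1)) (y z : X), Filter.Tendsto
      (fun k => pairMarg (projR qref (Q (2 * φ k + 2))) n y z) Filter.atTop
      (nhds (pairMarg (projR qref qoo) n y z)) := by
    intro n y z
    simp only [pairMarg]
    refine tendsto_finset_sum _ fun ω _ => ?_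
    by_cases h : ω n.castSucc = y ∧ ω n.succ = z
    · simpa [h] using hRtend ω
    · simpa [h] using (tendsto_const_nhds : Filter.Tendsto _ Filter.atTop (nhds (0:ℝ)))
  have hMtend : ∀ ω, Filter.Tendsto (fun k => projM (projR qref (Q (2 * φ k + 2))) ω)
      Filter.atTop (nhds (projM (projR qref qoo) ω)) := by
    intro ω
    simp only [projM]
    refine Filter.Tendsto.mul (hAtm 0 (ω 0)) ?_
    refine tendsto_finset_prod _ fun n _ => ?_
    simp only [transP]
    exact (hApm n _ _).div (hAtm n.castSucc _)
      (timeMarg_pos (projR_pos hqrefpos hqoopos) n.castSucc _).ne'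
  have hgap2eq : ∀ k : ℕ, Q (2 * φ k + 2 + 1 + 1) = projM (projR qref (Q (2 * φ k + 2))) := by
    intro k
    have := hQeven (φ k + 1)
    rw [show 2 * (φ k + 1) + 2 = 2 * φ k + 2 + 1 + 1 by ring,
      show 2 * (φ k + 1) + 1 = 2 * φ k + 2 + 1 by ring] at this
    rw [this, hgap1eq k]
  have hfixM : qoo = projM qoo := by
    have hlim : Filter.Tendsto (fun k => KLd (projR qref (Q (2 * φ k + 2)))
        (projM (projR qref (Q (2 * φ k + 2))))) Filter.atTop
        (nhds (KLd (projR qref qoo) (projM (projR qref qoo)))) :=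
      tendsto_KLd hRtend hMtend (projR_pos hqrefpos hqoopos)
        (projM_pos (projR_pos hqrefpos hqoopos))
    have hidx2 : Filter.Tendsto (fun k => 2 * φ k + 2 + 1) Filter.atTop Filter.atTop := by
      refine Filter.tendsto_atTop_mono (fun k => ?_) Filter.tendsto_id
      have h : k ≤ φ k := hφmono.le_apply
      simp only [id_eq]
      omega
    have hzero : Filter.Tendsto (fun k => KLd (Q (2 * φ k + 2 + 1)) (Q (2 * φ k + 2 + 1 + 1)))
        Filter.atTop (nhds 0) := hg0.comp hidx2
    have heq : (fun k => KLd (Q (2 * φ k + 2 + 1)) (Q (2 * φ k + 2 + 1 + 1)))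
        = fun k => KLd (projR qref (Q (2 * φ k + 2)))
            (projM (projR qref (Q (2 * φ k + 2)))) :=
      funext fun k => by rw [hgap1eq k, hgap2eq k]
    rw [heq] at hzero
    have h0 : KLd (projR qref qoo) (projM (projR qref qoo)) = 0 := tendsto_nhds_unique hlim hzero
    rw [← hfixR] at h0
    refine KLd_eq_zero_imp hqoopmf ⟨fun ω => (projM_pos hqoopos ω).le, ?_⟩
      hqoopos (projM_pos hqoopos) h0
    rw [sum_projM hqoopos, hqoopmf.2]
  have hqooM : IsMarkov qoo := fun ω => congrFun hfixM ω
  have hqooR : ∀ ω, qoo ω = projR qref qoo ω := fun ω => congrFun hfixR ω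
  -- Step 7: qoo is the minimizer, hence qoo = qs
  have hqoomin : ∀ q', InPiN p0 p1 q' → KLd qoo qref ≤ KLd q' qref := by
    intro q' hq'
    refine schrodinger_min hN hqrefpos hqrefM hqoopmf hqoopos hqooR hqooM hq'.1 ?_ ?_
    · intro x; rw [hq'.2.1 x, hqooPi.2.1 x]
    · intro x; rw [hq'.2.2 x, hqooPi.2.2 x]
  have hqooqs : qoo = qs := hqsuniq qoo hqooPi hqoomin
  -- Step 8: KL(Q l ‖ qs) is nonincreasing and tends to 0 along the subsequence
  have hqspos : ∀ ω, 0 < qs ω := hqooqs ▸ hqoopos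
  have hqsR : ∀ ω, qs ω = projR qref qs ω := hqooqs ▸ hqooR
  have hqsM : IsMarkov qs := hqooqs ▸ hqooM
  have hastep := hstep qs hqspos hqsR hqsM
  have haanti : ∀ l, KLd (Q (l + 1)) qs ≤ KLd (Q l) qs :=
    fun l => by linarith [hastep l, hgnonneg l]
  have hamono : Antitone (fun l => KLd (Q l) qs) := antitone_nat_of_succ_le haanti
  have hann : ∀ l, 0 ≤ KLd (Q l) qs :=
    fun l => KLd_nonneg' (good l).1.1 hqs.1 hqspos
  have hsubtend : Filter.Tendsto (fun k => KLd (Q (2 * φ k + 2)) qs) Filter.atTop (nhds 0) := by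
    have h1 : Filter.Tendsto (fun k => KLd (Q (2 * φ k + 2)) qs) Filter.atTop
        (nhds (KLd qoo qs)) :=
      tendsto_KLd hptw (fun ω => tendsto_const_nhds) hqoopos hqspos
    rw [hqooqs, KLd_self] at h1
    exact h1
  -- Step 9: conclude
  rw [Metric.tendsto_atTop]
  intro ε hε
  obtain ⟨K, hK⟩ := Metric.tendsto_atTop.mp hsubtend ε hε
  refine ⟨2 * φ K + 2, fun l hl => ?_⟩
  have h2 := hK K le_rfl
  rw [Real.dist_eq, sub_zero, abs_of_nonneg (hann _)] at h2
  rw [Real.dist_eq, sub_zero, abs_of_nonneg (hann l)]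
  exact lt_of_le_of_lt (hamono hl) h2
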